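/- Let w = w₁w₂⋯w_n be a partial permutation belonging to a well-nested family. If j ∈ [n−1] is any index with w_j > w_{j+1}, and ŵ is obtained by deleting w_j and w_{j+1} from w, then NDes(w) = {(w_j, w_{j+1})} ⊔ NDes(ŵ) and NRes(w) = NRes(ŵ). -/

import Mathlib

/-- One step of the word relation `≾`. -/
def PrecStep (x y : List ℤ) : Prop :=
  ∃ u v : List ℤ, ∃ A B C : ℤ, A < B ∧ B < C ∧
    x = u ++ [B, C, A] ++ v ∧ y = u ++ [C, A, B] ++ v

/-- A word has a consecutive 321-pattern if three consecutive letters strictly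
decrease. -/
def Has321 (w : List ℤ) : Prop :=
  ∃ u v : List ℤ, ∃ a b c : ℤ, w = u ++ [a, b, c] ++ v ∧ b < a ∧ c < b

/-- A well-nested family of partial permutations. -/
def WellNested (E : Set (List ℤ)) : Prop :=
  (∀ w ∈ E, w.Nodup) ∧ (∀ x y, PrecStep x y → (x ∈ E ↔ y ∈ E)) ∧
    (∀ w ∈ E, ¬Has321 w)

/-- Split a word at its first descent: returns `(prefix, x, y, suffix)` where
`x > y` is the first descent pair, so the word is `prefix ++ x :: y :: suffix`
and the prefix is weakly increasing before the descent. -/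
def splitFirstDesc : List ℤ → Option (List ℤ × ℤ × ℤ × List ℤ)
  | [] => none
  | [_] => none
  | a :: b :: rest =>
    if b < a then some ([], a, b, rest)
    else
      match splitFirstDesc (b :: rest) with
      | none => none
      | some (p, x, y, s) => some (a :: p, x, y, s)

/-- Fueled computation of the nested descent set. -/
def ndesAux : ℕ → List ℤ → Finset (ℤ × ℤ)
  | 0, _ => ∅
  | fuel + 1, w =>
    match splitFirstDesc w with
    | none => ∅
    | some (p, x, y, s) => insert (x, y) (ndesAux fuel (p ++ s))

/-- The nested descent set `NDes(w)`: repeatedly record and remove the first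
descent pair. -/
def ndes (w : List ℤ) : Finset (ℤ × ℤ) := ndesAux w.length w

/-- Fueled computation of the nested residue. -/
def nresAux : ℕ → List ℤ → Finset ℤ
  | 0, w => w.toFinset
  | fuel + 1, w =>
    match splitFirstDesc w with
    | none => w.toFinset
    | some (p, _, _, s) => nresAux fuel (p ++ s)

/-- The nested residue `NRes(w)`: the letters remaining when no descent is left. -/
def nres (w : List ℤ) : Finset ℤ := nresAux w.length w

/- ======================= auxiliary development ======================= -/


def WStep (x y : List ℤ) : Prop := PrecStep x y ∨ PrecStep y x

def WEq : List ℤ → List ℤ → Prop := Relation.ReflTransGen WStep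

lemma wstep_symm {x y : List ℤ} (h : WStep x y) : WStep y x := h.symm

lemma wstep_mid (l r : List ℤ) {A B C : ℤ} (h1 : A < B) (h2 : B < C) :
    WStep (l ++ B :: C :: A :: r) (l ++ C :: A :: B :: r) :=
  Or.inl ⟨l, r, A, B, C, h1, h2, by simp, by simp⟩

lemma has321_mid (l r : List ℤ) {a b c : ℤ} (h1 : b < a) (h2 : c < b) :
    Has321 (l ++ a :: b :: c :: r) :=
  ⟨l, r, a, b, c, by simp, h1, h2⟩

def GoodW (w : List ℤ) : Prop := ∀ z, WEq w z → z.Nodup ∧ ¬Has321 z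

lemma GoodW.nodup {w : List ℤ} (h : GoodW w) : w.Nodup := (h w .refl).1

lemma GoodW.not321 {w : List ℤ} (h : GoodW w) : ¬Has321 w := (h w .refl).2

lemma GoodW.mono {w z : List ℤ} (h : GoodW w) (hz : WEq w z) : GoodW z :=
  fun z' hz' => h z' (hz.trans hz')

/- ---------------- splitFirstDesc lemmas ---------------- -/

lemma split_some : ∀ (p : List ℤ) {x y : ℤ} (s : List ℤ),
    List.Chain' (· ≤ ·) (p ++ [x]) → y < x →
    splitFirstDesc (p ++ x :: y :: s) = some (p, x, y, s) := by
  intro p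
  induction p with
  | nil => intro x y s _ hyx; simp [splitFirstDesc, hyx]
  | cons a p ih =>
    intro x y s hch hyx
    have hch' : List.Chain' (· ≤ ·) (p ++ [x]) := (List.isChain_cons.mp hch).2
    have hle : ∀ z ∈ (p ++ [x]).head?, a ≤ z := (List.isChain_cons.mp hch).1
    have hrec := ih s hch' hyx
    cases p with
    | nil =>
      have hax : a ≤ x := hle x (by simp)
      simp [splitFirstDesc, not_lt.mpr hax, hyx]
    | cons c p' =>
      have hac : a ≤ c := hle c (by simp)
      have hrec' : splitFirstDesc (c :: (p' ++ x :: y :: s)) = some (c :: p', x, y, s) := by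
        simpa using hrec
      simp [splitFirstDesc, not_lt.mpr hac, hrec']

lemma split_none_chain : ∀ (w : List ℤ), splitFirstDesc w = none →
    List.Chain' (· ≤ ·) w := by
  intro w
  induction w with
  | nil => intro _; exact List.isChain_nil
  | cons a w ih =>
    intro h
    cases w with
    | nil => exact List.isChain_singleton _
    | cons b rest =>
      by_cases hba : b < a
      · simp [splitFirstDesc, hba] at h
      · have : splitFirstDesc (b :: rest) = none := by
          simp only [splitFirstDesc, if_neg hba] at h
          cases hsp : splitFirstDesc (b :: rest) with
          | none => rfl
          | some q => rw [hsp] at h; obtain ⟨p, x, y, s⟩ := q; simp at h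
        exact List.isChain_cons_cons.mpr ⟨not_lt.mp hba, ih this⟩

lemma split_eq : ∀ (w p : List ℤ) (x y : ℤ) (s : List ℤ),
    splitFirstDesc w = some (p, x, y, s) →
    w = p ++ x :: y :: s ∧ y < x ∧ List.Chain' (· ≤ ·) (p ++ [x]) := by
  intro w
  induction w with
  | nil => intro p x y s h; simp [splitFirstDesc] at h
  | cons a w ih =>
    intro p x y s h
    cases w with
    | nil => simp [splitFirstDesc] at h
    | cons b rest =>
      by_cases hba : b < a
      · simp only [splitFirstDesc, if_pos hba, Option.some.injEq, Prod.mk.injEq] at h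
        obtain ⟨h1, h2, h3, h4⟩ := h
        subst h1; subst h2; subst h3; subst h4
        exact ⟨by simp, hba, List.isChain_singleton _⟩
      · simp only [splitFirstDesc, if_neg hba] at h
        cases hsp : splitFirstDesc (b :: rest) with
        | none => rw [hsp] at h; simp at h
        | some q =>
          rw [hsp] at h
          obtain ⟨p', x', y', s'⟩ := q
          simp only [Option.some.injEq, Prod.mk.injEq] at h
          obtain ⟨rfl, rfl, rfl, rfl⟩ := h
          obtain ⟨he, hyx, hch⟩ := ih p' x' y' s' hsp
          refine ⟨by simp [he], hyx, ?_⟩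
          cases p' with
          | nil =>
            have hbx : b = x' := by simpa using congrArg (·.head?) he
            subst hbx
            exact List.isChain_cons_cons.mpr ⟨not_lt.mp hba, by simp⟩
          | cons c p'' =>
            have hbc : b = c := by simpa using congrArg (·.head?) he
            subst hbc
            exact List.isChain_cons_cons.mpr ⟨not_lt.mp hba, hch⟩

/- ---------------- fuel lemmas ---------------- -/

lemma ndesAux_congr : ∀ (f g : ℕ) (w : List ℤ), w.length ≤ f → w.length ≤ g →
    ndesAux f w = ndesAux g w := by
  intro f
  induction f with
  | zero =>
    intro g w hf _
    have : w = [] := List.length_eq_zero_iff.mp (Nat.le_zero.mp hf)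
    subst this
    cases g with
    | zero => rfl
    | succ g => simp [ndesAux, splitFirstDesc]
  | succ f ih =>
    intro g w hf hg
    cases g with
    | zero =>
      have : w = [] := List.length_eq_zero_iff.mp (Nat.le_zero.mp hg)
      subst this
      simp [ndesAux, splitFirstDesc]
    | succ g =>
      simp only [ndesAux]
      cases hsp : splitFirstDesc w with
      | none => rfl
      | some q =>
        obtain ⟨p, x, y, s⟩ := q
        obtain ⟨he, -, -⟩ := split_eq w p x y s hsp
        have hlen : (p ++ s).length + 2 = w.length := by simp only [he, List.length_append, List.length_cons]; omega
        show insert (x, y) (ndesAux f (p ++ s)) = insert (x, y) (ndesAux g (p ++ s))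
        rw [ih g (p ++ s) (by omega) (by omega)]

lemma nresAux_congr : ∀ (f g : ℕ) (w : List ℤ), w.length ≤ f → w.length ≤ g →
    nresAux f w = nresAux g w := by
  intro f
  induction f with
  | zero =>
    intro g w hf _
    have : w = [] := List.length_eq_zero_iff.mp (Nat.le_zero.mp hf)
    subst this
    cases g with
    | zero => rfl
    | succ g => simp [nresAux, splitFirstDesc]
  | succ f ih =>
    intro g w hf hg
    cases g with
    | zero =>
      have : w = [] := List.length_eq_zero_iff.mp (Nat.le_zero.mp hg)
      subst this
      simp [nresAux, splitFirstDesc]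
    | succ g =>
      simp only [nresAux]
      cases hsp : splitFirstDesc w with
      | none => rfl
      | some q =>
        obtain ⟨p, x, y, s⟩ := q
        obtain ⟨he, -, -⟩ := split_eq w p x y s hsp
        have hlen : (p ++ s).length + 2 = w.length := by simp only [he, List.length_append, List.length_cons]; omega
        show nresAux f (p ++ s) = nresAux g (p ++ s)
        rw [ih g (p ++ s) (by omega) (by omega)]

lemma mem_ndesAux_fst : ∀ (f : ℕ) (w : List ℤ) (c d : ℤ),
    (c, d) ∈ ndesAux f w → c ∈ w := by
  intro f
  induction f with
  | zero => intro w c d h; simp [ndesAux] at h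
  | succ f ih =>
    intro w c d h
    simp only [ndesAux] at h
    cases hsp : splitFirstDesc w with
    | none => rw [hsp] at h; simp at h
    | some q =>
      obtain ⟨p, x, y, s⟩ := q
      rw [hsp] at h
      obtain ⟨he, -, -⟩ := split_eq w p x y s hsp
      have h : (c, d) ∈ insert (x, y) (ndesAux f (p ++ s)) := h
      simp only [Finset.mem_insert, Prod.mk.injEq] at h
      rcases h with ⟨h1, _⟩ | h
      · subst h1; simp [he]
      · have := ih (p ++ s) c d h
        rw [he]
        simp only [List.mem_append] at this ⊢
        rcases this with h | h
        · exact Or.inl h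
        · exact Or.inr (by simp [h])

/- ---------------- Safe ---------------- -/

def SafeAux : ℕ → List ℤ → Prop
  | 0, w => ¬Has321 w
  | fuel + 1, w => ¬Has321 w ∧ ∀ p x y s, splitFirstDesc w = some (p, x, y, s) →
      SafeAux fuel (p ++ s)

lemma safeAux_not321 : ∀ (f : ℕ) (w : List ℤ), SafeAux f w → ¬Has321 w := by
  intro f w h
  cases f with
  | zero => exact h
  | succ f => exact h.1

lemma safeAux_congr : ∀ (f g : ℕ) (w : List ℤ), w.length ≤ f → w.length ≤ g →
    (SafeAux f w ↔ SafeAux g w) := by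
  intro f
  induction f with
  | zero =>
    intro g w hf _
    have : w = [] := List.length_eq_zero_iff.mp (Nat.le_zero.mp hf)
    subst this
    cases g with
    | zero => rfl
    | succ g =>
      simp only [SafeAux]
      constructor
      · intro h; exact ⟨h, by intro p x y s hsp; simp [splitFirstDesc] at hsp⟩
      · intro h; exact h.1
  | succ f ih =>
    intro g w hf hg
    cases g with
    | zero =>
      have : w = [] := List.length_eq_zero_iff.mp (Nat.le_zero.mp hg)
      subst this
      simp only [SafeAux]
      constructor
      · intro h; exact h.1
      · intro h; exact ⟨h, by intro p x y s hsp; simp [splitFirstDesc] at hsp⟩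
    | succ g =>
      simp only [SafeAux]
      constructor
      · intro h
        refine ⟨h.1, fun p x y s hsp => ?_⟩
        obtain ⟨he, -, -⟩ := split_eq w p x y s hsp
        have hlen : (p ++ s).length + 2 = w.length := by simp only [he, List.length_append, List.length_cons]; omega
        exact (ih g (p ++ s) (by omega) (by omega)).mp (h.2 p x y s hsp)
      · intro h
        refine ⟨h.1, fun p x y s hsp => ?_⟩
        obtain ⟨he, -, -⟩ := split_eq w p x y s hsp
        have hlen : (p ++ s).length + 2 = w.length := by simp only [he, List.length_append, List.length_cons]; omega
        exact (ih g (p ++ s) (by omega) (by omega)).mpr (h.2 p x y s hsp)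

def SafeW (w : List ℤ) : Prop := SafeAux w.length w
-- goodA
lemma goodA : ∀ (n : ℕ) (u : List ℤ) {x y : ℤ} (v : List ℤ), u.length ≤ n →
    GoodW (u ++ x :: y :: v) → y < x → ¬Has321 (u ++ v) := by
  intro n
  induction n using Nat.strong_induction_on with
  | _ n ih =>
  intro u x y v hn hG hyx h321
  obtain ⟨l, r, g1, g2, g3, hz, h21, h32⟩ := h321
  rw [List.append_assoc] at hz
  rcases List.append_eq_append_iff.mp hz with ⟨t, hl, hv⟩ | ⟨t, hu, hd⟩
  · -- window inside v
    subst hv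
    exact hG.not321 (by simpa using has321_mid (u ++ x :: y :: t) r h21 h32)
  · -- u = l ++ t
    subst hu
    match t, hd with
    | [], hd =>
      -- v = g1 :: g2 :: g3 :: r
      have hv : v = g1 :: g2 :: g3 :: r := hd.symm
      subst hv
      exact hG.not321 (by simpa using has321_mid (l ++ [x, y]) r h21 h32)
    | [a1], hd =>
      -- u = l ++ [g1], v = g2 :: g3 :: r
      simp only [List.cons_append, List.nil_append, List.cons.injEq] at hd
      obtain ⟨rfl, hv⟩ := hd
      have hv : v = g2 :: g3 :: r := hv.symm
      subst hv
      have hG' : GoodW (l ++ g1 :: x :: y :: g2 :: g3 :: r) := by simpa using hG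
      have h5 : [g1, x, y, g2, g3].Nodup :=
        List.Nodup.sublist (List.IsInfix.sublist ⟨l, r, by simp⟩) hG'.nodup
      simp only [List.nodup_cons, List.mem_cons, List.mem_singleton, List.nodup_nil,
        not_or, List.not_mem_nil, and_true] at h5
      obtain ⟨⟨ht1x, ht1y, ht1g2, ht1g3, -⟩, ⟨hxy, hxg2, hxg3, -⟩, ⟨hyg2, hyg3, -⟩, ⟨hg2g3, -⟩, -⟩ := h5
      rcases (Ne.lt_or_gt ht1x) with hx1 | hx1
      case inr =>
        -- x < g1 : direct 321 (g1, x, y)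
        exact hG'.not321 (has321_mid l (g2 :: g3 :: r) hx1 hyx)
      case inl =>
        -- g1 < x
        -- y < g2 else 321 (x,y,g2)
        rcases (Ne.lt_or_gt hyg2) with hy2 | hy2
        · -- y < g2 : move (g1,x,y) -> (x,y,g1), get 321 (g1,g2,g3)
          have hyt : y < g1 := lt_trans hy2 h21
          have st := wstep_mid l (g2 :: g3 :: r) (A := y) (B := g1) (C := x) hyt hx1
          exact (hG' _ (.single st)).2 (by simpa using has321_mid (l ++ [x, y]) r h21 h32)
        · -- g2 < y : direct 321 (x, y, g2)
          exact hG'.not321 (by simpa using has321_mid (l ++ [g1]) (g3 :: r) hyx hy2)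
    | [a1, a2], hd =>
      -- u = l ++ [g1, g2] = l ++ [g1, g2], v = g3 :: r
      simp only [List.cons_append, List.nil_append, List.cons.injEq] at hd
      obtain ⟨rfl, rfl, hv⟩ := hd
      have hv : v = g3 :: r := hv.symm
      subst hv
      have hG' : GoodW (l ++ g1 :: g2 :: x :: y :: g3 :: r) := by simpa using hG
      have h5 : [g1, g2, x, y, g3].Nodup :=
        List.Nodup.sublist (List.IsInfix.sublist ⟨l, r, by simp⟩) hG'.nodup
      simp only [List.nodup_cons, List.mem_cons, List.mem_singleton, List.nodup_nil,
        not_or, List.not_mem_nil, and_true] at h5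
      obtain ⟨⟨ht12, ht1x, ht1y, ht1g3, -⟩, ⟨ht2x, ht2y, ht2g3, -⟩, ⟨hxy, hxg3, -⟩, ⟨hyg3, -⟩, -⟩ := h5
      rcases (Ne.lt_or_gt ht2x) with hx2 | hx2
      case inr =>
        -- x < g2 : direct 321 (g1, g2, x)
        exact hG'.not321 (has321_mid l (y :: g3 :: r) h21 hx2)
      case inl =>
        -- g2 < x
        rcases (Ne.lt_or_gt hyg3) with hy3 | hy3
        · -- y < g3 : move (g2,x,y) -> (x,y,g2), then recurse with u' = l ++ [g1]
          have hyt : y < g2 := lt_trans hy3 h32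
          have st := wstep_mid (l ++ [g1]) (g3 :: r) (A := y) (B := g2) (C := x) hyt hx2
          have st' : WStep (l ++ g1 :: g2 :: x :: y :: g3 :: r)
              (l ++ g1 :: x :: y :: g2 :: g3 :: r) := by simpa using st
          have hG2 : GoodW ((l ++ [g1]) ++ x :: y :: (g2 :: g3 :: r)) := by
            simpa using hG'.mono (.single st')
          have hlen : (l ++ [g1]).length ≤ n - 1 := by
            have : (l ++ [g1, g2]).length ≤ n := hn
            simp only [List.length_append, List.length_cons, List.length_singleton] at this ⊢
            omega
          have hnn : n - 1 < n := by
            have : (l ++ [g1, g2]).length ≤ n := hn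
            simp only [List.length_append, List.length_cons] at this
            omega
          exact ih (n - 1) hnn (l ++ [g1]) (g2 :: g3 :: r) hlen hG2 hyx
            (by simpa using has321_mid l r h21 h32)
        · -- g3 < y : direct 321 (x, y, g3)
          exact hG'.not321 (by simpa using has321_mid (l ++ [g1, g2]) r hyx hy3)
    | a1 :: a2 :: a3 :: t', hd =>
      -- window inside u
      simp only [List.cons_append, List.cons.injEq] at hd
      obtain ⟨rfl, rfl, rfl, hr⟩ := hd
      have hr2 : r = t' ++ v := by symm; simpa using hr.symm
      subst hr2
      exact hG.not321 (by simpa using has321_mid l (t' ++ x :: y :: v) h21 h32)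
lemma weq_of_steps2 {w m t : List ℤ} (s1 : WStep w m) (s2 : WStep m t) : WEq w t :=
  (Relation.ReflTransGen.single s1).tail s2

lemma weq_of_steps3 {w m m' t : List ℤ} (s1 : WStep w m) (s2 : WStep m m')
    (s3 : WStep m' t) : WEq w t :=
  ((Relation.ReflTransGen.single s1).tail s2).tail s3

lemma goodB_J1a (α β : List ℤ) {d e x y f : ℤ}
    (hG : GoodW (α ++ d :: e :: x :: y :: f :: β)) (hyx : y < x)
    (hfd : f < d) (hde : d < e) :
    ∃ u' v', WEq (α ++ d :: e :: x :: y :: f :: β) (u' ++ x :: y :: v') ∧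
      u' ++ v' = α ++ e :: f :: d :: β := by
  have h5 : [d, e, x, y, f].Nodup :=
    List.Nodup.sublist (List.IsInfix.sublist ⟨α, β, by simp⟩) hG.nodup
  simp only [List.nodup_cons, List.mem_cons, List.mem_singleton, List.nodup_nil,
    not_or, List.not_mem_nil, and_true] at h5
  obtain ⟨⟨-, -, -, -, -⟩, ⟨hex, -, -, -⟩, ⟨-, -, -⟩, ⟨hyf, -⟩, -⟩ := h5
  rcases Ne.lt_or_gt hex with hex | hex
  case inr =>
    exact (hG.not321 (by simpa using has321_mid (α ++ [d]) (f :: β) hex hyx)).elim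
  case inl =>
    rcases Ne.lt_or_gt hyf with hyf | hyf
    case inr =>
      exact (hG.not321 (by simpa using has321_mid (α ++ [d, e]) β hyx hyf)).elim
    case inl =>
      have hfx : f < x := lt_trans (lt_trans hfd hde) hex
      have s1 : WStep (α ++ d :: e :: x :: y :: f :: β) (α ++ d :: e :: f :: x :: y :: β) := by
        have := wstep_symm (wstep_mid (α ++ [d, e]) β (A := y) (B := f) (C := x) hyf hfx)
        simpa using this
      have s2 : WStep (α ++ d :: e :: f :: x :: y :: β) (α ++ e :: f :: d :: x :: y :: β) :=
        wstep_mid α (x :: y :: β) (A := f) (B := d) (C := e) hfd hde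
      refine ⟨α ++ [e, f, d], β, ?_, by simp⟩
      have he : (α ++ [e, f, d]) ++ x :: y :: β = α ++ e :: f :: d :: x :: y :: β := by simp
      rw [he]
      exact weq_of_steps2 s1 s2

lemma goodB_J1b (α β : List ℤ) {d e x y f : ℤ}
    (hG : GoodW (α ++ d :: e :: x :: y :: f :: β)) (hyx : y < x)
    (hef : e < f) (hfd : f < d) :
    ∃ u' v', WEq (α ++ d :: e :: x :: y :: f :: β) (u' ++ x :: y :: v') ∧
      u' ++ v' = α ++ f :: d :: e :: β := by
  have h5 : [d, e, x, y, f].Nodup :=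
    List.Nodup.sublist (List.IsInfix.sublist ⟨α, β, by simp⟩) hG.nodup
  simp only [List.nodup_cons, List.mem_cons, List.mem_singleton, List.nodup_nil,
    not_or, List.not_mem_nil, and_true] at h5
  obtain ⟨⟨-, hdx, -, -, -⟩, ⟨hex, hey, -, -⟩, ⟨-, hxf, -⟩, ⟨hyf, -⟩, -⟩ := h5
  rcases Ne.lt_or_gt hex with hex | hex
  case inr =>
    exact (hG.not321 (by simpa using has321_mid (α ++ [d]) (f :: β) hex hyx)).elim
  case inl =>
    rcases Ne.lt_or_gt hyf with hyf | hyf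
    case inr =>
      exact (hG.not321 (by simpa using has321_mid (α ++ [d, e]) β hyx hyf)).elim
    case inl =>
      rcases Ne.lt_or_gt hxf with hxf | hxf
      case inr =>
        -- f < x : path W ≈ defxy ≈ fdexy
        have s1 : WStep (α ++ d :: e :: x :: y :: f :: β) (α ++ d :: e :: f :: x :: y :: β) := by
          have := wstep_symm (wstep_mid (α ++ [d, e]) β (A := y) (B := f) (C := x) hyf hxf)
          simpa using this
        have s2 : WStep (α ++ d :: e :: f :: x :: y :: β) (α ++ f :: d :: e :: x :: y :: β) :=
          (wstep_mid α (x :: y :: β) (A := e) (B := f) (C := d) hef hfd).symm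
        refine ⟨α ++ [f, d, e], β, ?_, by simp⟩
        have he : (α ++ [f, d, e]) ++ x :: y :: β = α ++ f :: d :: e :: x :: y :: β := by simp
        rw [he]
        exact weq_of_steps2 s1 s2
      case inl =>
        -- x < f
        have hxd : x < d := lt_trans hxf hfd
        have s1 : WStep (α ++ d :: e :: x :: y :: f :: β) (α ++ x :: d :: e :: y :: f :: β) :=
          (wstep_mid α (y :: f :: β) (A := e) (B := x) (C := d) hex hxd).symm
        rcases Ne.lt_or_gt hey with hey | hey
        case inl =>
          -- e < y : path W ≈ xdeyf ≈ xydef ≈ xyfde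
          have hyd : y < d := lt_trans hyf hfd
          have s2 : WStep (α ++ x :: d :: e :: y :: f :: β) (α ++ x :: y :: d :: e :: f :: β) := by
            have := wstep_symm (wstep_mid (α ++ [x]) (f :: β) (A := e) (B := y) (C := d) hey hyd)
            simpa using this
          have s3 : WStep (α ++ x :: y :: d :: e :: f :: β) (α ++ x :: y :: f :: d :: e :: β) := by
            have := wstep_symm (wstep_mid (α ++ [x, y]) β (A := e) (B := f) (C := d) hef hfd)
            simpa using this
          exact ⟨α, f :: d :: e :: β, weq_of_steps3 s1 s2 s3, rfl⟩
        case inr =>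
          -- y < e : contradiction, xdeyf has 321 (d,e,y)
          have hed : e < d := lt_trans hef hfd
          exact ((hG _ (.single s1)).2
            (by simpa using has321_mid (α ++ [x]) (f :: β) hed hey)).elim

lemma goodB_J2a (α β : List ℤ) {e x y f g : ℤ}
    (hG : GoodW (α ++ e :: x :: y :: f :: g :: β)) (hyx : y < x)
    (hge : g < e) (hef : e < f) :
    ∃ u' v', WEq (α ++ e :: x :: y :: f :: g :: β) (u' ++ x :: y :: v') ∧
      u' ++ v' = α ++ f :: g :: e :: β := by
  have h5 : [e, x, y, f, g].Nodup :=
    List.Nodup.sublist (List.IsInfix.sublist ⟨α, β, by simp⟩) hG.nodup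
  simp only [List.nodup_cons, List.mem_cons, List.mem_singleton, List.nodup_nil,
    not_or, List.not_mem_nil, and_true] at h5
  obtain ⟨⟨hex, hey, -, -, -⟩, ⟨-, hxf, -, -⟩, ⟨hyf, -, -⟩, ⟨-, -⟩, -⟩ := h5
  rcases Ne.lt_or_gt hex with hex | hex
  case inr =>
    exact (hG.not321 (by simpa using has321_mid α (f :: g :: β) hex hyx)).elim
  case inl =>
    rcases Ne.lt_or_gt hyf with hyf | hyf
    case inr =>
      exact (hG.not321 (by simpa using has321_mid (α ++ [e]) (g :: β) hyx hyf)).elim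
    case inl =>
      rcases Ne.lt_or_gt hey with hey | hey
      case inr =>
        -- y < e : path W ≈ xyefg ≈ xyfge
        have s1 : WStep (α ++ e :: x :: y :: f :: g :: β) (α ++ x :: y :: e :: f :: g :: β) :=
          wstep_mid α (f :: g :: β) (A := y) (B := e) (C := x) hey hex
        have s2 : WStep (α ++ x :: y :: e :: f :: g :: β) (α ++ x :: y :: f :: g :: e :: β) := by
          have := wstep_mid (α ++ [x, y]) β (A := g) (B := e) (C := f) hge hef
          simpa using this
        exact ⟨α, f :: g :: e :: β, weq_of_steps2 s1 s2, rfl⟩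
      case inl =>
        -- e < y
        have hgy : g < y := lt_trans hge hey
        rcases Ne.lt_or_gt hxf with hxf | hxf
        case inl =>
          -- x < f : path W ≈ exfgy ≈ efgxy ≈ fgexy
          have hgx : g < x := lt_trans hge hex
          have s1 : WStep (α ++ e :: x :: y :: f :: g :: β) (α ++ e :: x :: f :: g :: y :: β) := by
            have := wstep_mid (α ++ [e, x]) β (A := g) (B := y) (C := f) hgy hyf
            simpa using this
          have s2 : WStep (α ++ e :: x :: f :: g :: y :: β) (α ++ e :: f :: g :: x :: y :: β) := by
            have := wstep_mid (α ++ [e]) (y :: β) (A := g) (B := x) (C := f) hgx hxf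
            simpa using this
          have s3 : WStep (α ++ e :: f :: g :: x :: y :: β) (α ++ f :: g :: e :: x :: y :: β) :=
            wstep_mid α (x :: y :: β) (A := g) (B := e) (C := f) hge hef
          refine ⟨α ++ [f, g, e], β, ?_, by simp⟩
          have he : (α ++ [f, g, e]) ++ x :: y :: β = α ++ f :: g :: e :: x :: y :: β := by simp
          rw [he]
          exact weq_of_steps3 s1 s2 s3
        case inr =>
          -- f < x : contradiction, efxyg has 321 (x,y,g)
          have s1 : WStep (α ++ e :: f :: x :: y :: g :: β) (α ++ e :: x :: y :: f :: g :: β) := by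
            have := wstep_mid (α ++ [e]) (g :: β) (A := y) (B := f) (C := x) hyf hxf
            simpa using this
          exact ((hG _ (.single s1.symm)).2
            (by simpa using has321_mid (α ++ [e, f]) β hyx hgy)).elim

lemma goodB_J2b (α β : List ℤ) {e x y f g : ℤ}
    (hG : GoodW (α ++ e :: x :: y :: f :: g :: β)) (hyx : y < x)
    (hfg : f < g) (hge : g < e) :
    ∃ u' v', WEq (α ++ e :: x :: y :: f :: g :: β) (u' ++ x :: y :: v') ∧
      u' ++ v' = α ++ g :: e :: f :: β := by
  have h5 : [e, x, y, f, g].Nodup :=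
    List.Nodup.sublist (List.IsInfix.sublist ⟨α, β, by simp⟩) hG.nodup
  simp only [List.nodup_cons, List.mem_cons, List.mem_singleton, List.nodup_nil,
    not_or, List.not_mem_nil, and_true] at h5
  obtain ⟨⟨hex, -, -, -, -⟩, ⟨-, -, -, -⟩, ⟨hyf, -, -⟩, ⟨-, -⟩, -⟩ := h5
  rcases Ne.lt_or_gt hex with hex | hex
  case inr =>
    exact (hG.not321 (by simpa using has321_mid α (f :: g :: β) hex hyx)).elim
  case inl =>
    rcases Ne.lt_or_gt hyf with hyf | hyf
    case inr =>
      exact (hG.not321 (by simpa using has321_mid (α ++ [e]) (g :: β) hyx hyf)).elim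
    case inl =>
      have hye : y < e := lt_trans (lt_trans hyf hfg) hge
      have s1 : WStep (α ++ e :: x :: y :: f :: g :: β) (α ++ x :: y :: e :: f :: g :: β) :=
        wstep_mid α (f :: g :: β) (A := y) (B := e) (C := x) hye hex
      have s2 : WStep (α ++ x :: y :: e :: f :: g :: β) (α ++ x :: y :: g :: e :: f :: β) := by
        have := wstep_symm (wstep_mid (α ++ [x, y]) β (A := f) (B := g) (C := e) hfg hge)
        simpa using this
      exact ⟨α, g :: e :: f :: β, weq_of_steps2 s1 s2, rfl⟩
lemma goodB (u v z' : List ℤ) {x y : ℤ} (hG : GoodW (u ++ x :: y :: v)) (hyx : y < x)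
    (hstep : WStep (u ++ v) z') :
    ∃ u' v', WEq (u ++ x :: y :: v) (u' ++ x :: y :: v') ∧ u' ++ v' = z' := by
  rcases hstep with ⟨α, β, A, B, C, h1, h2, hz, hz'⟩ | ⟨α, β, A, B, C, h1, h2, hz', hz⟩
  · -- u ++ v = α ++ [B,C,A] ++ β, z' = α ++ [C,A,B] ++ β
    subst hz'
    simp only [List.append_assoc, List.cons_append, List.nil_append] at hz
    rcases List.append_eq_append_iff.mp hz with ⟨t, hα, hv⟩ | ⟨t, hu, hd⟩
    · subst hα; subst hv
      refine ⟨u, t ++ C :: A :: B :: β, .single ?_, by simp⟩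
      simpa using wstep_mid (u ++ x :: y :: t) β h1 h2
    · subst hu
      match t, hd with
      | [], hd =>
        have hv : v = B :: C :: A :: β := by simpa using hd.symm
        subst hv
        refine ⟨α, C :: A :: B :: β, .single ?_, by simp⟩
        simpa using wstep_mid (α ++ [x, y]) β h1 h2
      | [a1], hd =>
        simp only [List.cons_append, List.nil_append, List.cons.injEq] at hd
        obtain ⟨rfl, hv⟩ := hd
        have hv : v = C :: A :: β := hv.symm
        subst hv
        have hG' : GoodW (α ++ B :: x :: y :: C :: A :: β) := by simpa using hG
        obtain ⟨u', v', hw, he⟩ := goodB_J2a α β hG' hyx h1 h2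
        refine ⟨u', v', ?_, by rw [he]; simp⟩
        have h3 : (α ++ [B]) ++ x :: y :: C :: A :: β = α ++ B :: x :: y :: C :: A :: β := by
          simp
        rw [h3]
        exact hw
      | [a1, a2], hd =>
        simp only [List.cons_append, List.nil_append, List.cons.injEq] at hd
        obtain ⟨rfl, rfl, hv⟩ := hd
        have hv : v = A :: β := hv.symm
        subst hv
        have hG' : GoodW (α ++ B :: C :: x :: y :: A :: β) := by simpa using hG
        obtain ⟨u', v', hw, he⟩ := goodB_J1a α β hG' hyx h1 h2
        refine ⟨u', v', ?_, by rw [he]; simp⟩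
        have h3 : (α ++ [B, C]) ++ x :: y :: A :: β = α ++ B :: C :: x :: y :: A :: β := by
          simp
        rw [h3]
        exact hw
      | a1 :: a2 :: a3 :: t', hd =>
        simp only [List.cons_append, List.cons.injEq] at hd
        obtain ⟨rfl, rfl, rfl, hβ⟩ := hd
        have hβ2 : β = t' ++ v := by symm; simpa using hβ.symm
        subst hβ2
        refine ⟨α ++ C :: A :: B :: t', v, .single ?_, by simp⟩
        have h3 : (α ++ C :: A :: B :: t') ++ x :: y :: v
            = α ++ C :: A :: B :: (t' ++ x :: y :: v) := by simp
        have h4 : (α ++ B :: C :: A :: t') ++ x :: y :: v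
            = α ++ B :: C :: A :: (t' ++ x :: y :: v) := by simp
        rw [h3, h4]
        exact wstep_mid α (t' ++ x :: y :: v) h1 h2
  · -- u ++ v = α ++ [C,A,B] ++ β, z' = α ++ [B,C,A] ++ β
    subst hz'
    simp only [List.append_assoc, List.cons_append, List.nil_append] at hz
    rcases List.append_eq_append_iff.mp hz with ⟨t, hα, hv⟩ | ⟨t, hu, hd⟩
    · subst hα; subst hv
      refine ⟨u, t ++ B :: C :: A :: β, .single ?_, by simp⟩
      simpa using wstep_symm (wstep_mid (u ++ x :: y :: t) β h1 h2)
    · subst hu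
      match t, hd with
      | [], hd =>
        have hv : v = C :: A :: B :: β := by simpa using hd.symm
        subst hv
        refine ⟨α, B :: C :: A :: β, .single ?_, by simp⟩
        simpa using wstep_symm (wstep_mid (α ++ [x, y]) β h1 h2)
      | [a1], hd =>
        simp only [List.cons_append, List.nil_append, List.cons.injEq] at hd
        obtain ⟨rfl, hv⟩ := hd
        have hv : v = A :: B :: β := hv.symm
        subst hv
        have hG' : GoodW (α ++ C :: x :: y :: A :: B :: β) := by simpa using hG
        obtain ⟨u', v', hw, he⟩ := goodB_J2b α β hG' hyx h1 h2
        refine ⟨u', v', ?_, by rw [he]; simp⟩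
        have h3 : (α ++ [C]) ++ x :: y :: A :: B :: β = α ++ C :: x :: y :: A :: B :: β := by
          simp
        rw [h3]
        exact hw
      | [a1, a2], hd =>
        simp only [List.cons_append, List.nil_append, List.cons.injEq] at hd
        obtain ⟨rfl, rfl, hv⟩ := hd
        have hv : v = B :: β := hv.symm
        subst hv
        have hG' : GoodW (α ++ C :: A :: x :: y :: B :: β) := by simpa using hG
        obtain ⟨u', v', hw, he⟩ := goodB_J1b α β hG' hyx h1 h2
        refine ⟨u', v', ?_, by rw [he]; simp⟩
        have h3 : (α ++ [C, A]) ++ x :: y :: B :: β = α ++ C :: A :: x :: y :: B :: β := by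
          simp
        rw [h3]
        exact hw
      | a1 :: a2 :: a3 :: t', hd =>
        simp only [List.cons_append, List.cons.injEq] at hd
        obtain ⟨rfl, rfl, rfl, hβ⟩ := hd
        have hβ2 : β = t' ++ v := by symm; simpa using hβ.symm
        subst hβ2
        refine ⟨α ++ B :: C :: A :: t', v, .single ?_, by simp⟩
        have h3 : (α ++ C :: A :: B :: t') ++ x :: y :: v
            = α ++ C :: A :: B :: (t' ++ x :: y :: v) := by simp
        have h4 : (α ++ B :: C :: A :: t') ++ x :: y :: v
            = α ++ B :: C :: A :: (t' ++ x :: y :: v) := by simp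
        rw [h3, h4]
        exact (wstep_mid α (t' ++ x :: y :: v) h1 h2).symm

lemma weq_del_invariant (u v : List ℤ) {x y : ℤ} (hG : GoodW (u ++ x :: y :: v))
    (hyx : y < x) :
    ∀ z, WEq (u ++ v) z → ∃ u' v', WEq (u ++ x :: y :: v) (u' ++ x :: y :: v') ∧ u' ++ v' = z := by
  intro z h
  induction h with
  | refl => exact ⟨u, v, .refl, rfl⟩
  | tail h1 st ih =>
    obtain ⟨u', v', hw, rfl⟩ := ih
    obtain ⟨u'', v'', hw2, he2⟩ := goodB u' v' _ (hG.mono hw) hyx st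
    exact ⟨u'', v'', hw.trans hw2, he2⟩

lemma good_del (u v : List ℤ) {x y : ℤ} (hG : GoodW (u ++ x :: y :: v)) (hyx : y < x) :
    GoodW (u ++ v) := by
  intro z hz
  obtain ⟨u', v', hw, rfl⟩ := weq_del_invariant u v hG hyx z hz
  have hG' := hG.mono hw
  constructor
  · exact List.Nodup.sublist
      (List.Sublist.append_left
        ((List.sublist_cons_self y v').trans (List.sublist_cons_self x (y :: v'))) u')
      hG'.nodup
  · exact goodA u'.length u' v' le_rfl hG' hyx

lemma good_safeAux : ∀ (n m : ℕ) (w : List ℤ), w.length ≤ n → GoodW w → SafeAux m w := by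
  intro n
  induction n with
  | zero =>
    intro m w hn hG
    cases m with
    | zero => exact hG.not321
    | succ m =>
      refine ⟨hG.not321, fun p x y s hsp => ?_⟩
      have hw : w = [] := List.length_eq_zero_iff.mp (Nat.le_zero.mp hn)
      subst hw
      simp [splitFirstDesc] at hsp
  | succ n ih =>
    intro m w hn hG
    cases m with
    | zero => exact hG.not321
    | succ m =>
      refine ⟨hG.not321, fun p x y s hsp => ?_⟩
      obtain ⟨he, hyx, -⟩ := split_eq w p x y s hsp
      subst he
      have hG2 : GoodW (p ++ s) := good_del p s hG hyx
      refine ih m (p ++ s) ?_ hG2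
      simp only [List.length_append, List.length_cons] at hn ⊢
      omega
lemma ndes_split {w pp : List ℤ} {x y : ℤ} {s : List ℤ}
    (hsp : splitFirstDesc w = some (pp, x, y, s)) (hw : w = pp ++ x :: y :: s) :
    ndes w = insert (x, y) (ndes (pp ++ s)) := by
  have hlen : w.length = (pp ++ s).length + 2 := by
    rw [hw]; simp only [List.length_append, List.length_cons]; omega
  show ndesAux w.length w = _
  rw [hlen]
  have h1 : ndesAux ((pp ++ s).length + 2) w
      = insert (x, y) (ndesAux ((pp ++ s).length + 1) (pp ++ s)) := by
    simp only [ndesAux, hsp]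
  rw [h1, ndesAux_congr _ (pp ++ s).length _ (by omega) le_rfl]
  rfl

lemma nres_split {w pp : List ℤ} {x y : ℤ} {s : List ℤ}
    (hsp : splitFirstDesc w = some (pp, x, y, s)) (hw : w = pp ++ x :: y :: s) :
    nres w = nres (pp ++ s) := by
  have hlen : w.length = (pp ++ s).length + 2 := by
    rw [hw]; simp only [List.length_append, List.length_cons]; omega
  show nresAux w.length w = _
  rw [hlen]
  have h1 : nresAux ((pp ++ s).length + 2) w = nresAux ((pp ++ s).length + 1) (pp ++ s) := by
    simp only [nresAux, hsp]
  rw [h1, nresAux_congr _ (pp ++ s).length _ (by omega) le_rfl]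
  rfl

lemma main_case1 (u v : List ℤ) {a b : ℤ} (hnd : (u ++ a :: b :: v).Nodup)
    (hch : List.Chain' (· ≤ ·) (u ++ [a])) (hba : b < a) :
    ndes (u ++ a :: b :: v) = insert (a, b) (ndes (u ++ v)) ∧ (a, b) ∉ ndes (u ++ v) ∧
      nres (u ++ a :: b :: v) = nres (u ++ v) := by
  have hsp := split_some u v hch hba
  refine ⟨ndes_split hsp rfl, ?_, nres_split hsp rfl⟩
  intro hm
  have ha : a ∈ u ++ v := mem_ndesAux_fst _ _ a b hm
  obtain ⟨hu, hcons, hdisj⟩ := List.nodup_append'.mp hnd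
  rcases List.mem_append.mp ha with ha | ha
  · exact hdisj ha (by simp)
  · have : a ∉ b :: v := (List.nodup_cons.mp hcons).1
    exact this (by simp [ha])

lemma main_aux : ∀ (n : ℕ) (w u v : List ℤ) (a b : ℤ), w.length ≤ n → w.Nodup → SafeW w →
    w = u ++ a :: b :: v → b < a →
    ndes w = insert (a, b) (ndes (u ++ v)) ∧ (a, b) ∉ ndes (u ++ v) ∧
      nres w = nres (u ++ v) := by
  intro n
  induction n using Nat.strong_induction_on with
  | _ n ih =>
  intro w u v a b hn hnd hsafe hw hba
  cases hsp : splitFirstDesc w with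
  | none =>
    exfalso
    have hch := split_none_chain w hsp
    have hab : List.Chain' (· ≤ ·) [a, b] :=
      hch.infix ⟨u, v, by rw [hw]; simp⟩
    have := List.isChain_pair.mp hab
    omega
  | some q =>
    obtain ⟨p, x, y, s⟩ := q
    obtain ⟨he, hyx, hch⟩ := split_eq w p x y s hsp
    have heq : u ++ (a :: b :: v) = p ++ (x :: y :: s) := by rw [← hw, ← he]
    rcases List.append_eq_append_iff.mp heq with ⟨t, hp, hd⟩ | ⟨t, hu, hd⟩
    · -- p = u ++ t
      match t, hd with
      | [], hd =>
        simp only [List.nil_append, List.cons.injEq] at hd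
        obtain ⟨rfl, rfl, rfl⟩ := hd
        simp only [List.append_nil] at hp
        obtain rfl : p = u := hp
        subst hw
        exact main_case1 _ _ hnd hch hba
      | [c1], hd =>
        exfalso
        simp only [List.cons_append, List.nil_append, List.cons.injEq] at hd
        obtain ⟨rfl, rfl, -⟩ := hd
        subst hp
        have hax : List.Chain' (· ≤ ·) [a, b] := hch.infix ⟨u, [], by simp⟩
        have := List.isChain_pair.mp hax
        omega
      | c1 :: c2 :: t', hd =>
        exfalso
        simp only [List.cons_append, List.cons.injEq] at hd
        obtain ⟨rfl, rfl, -⟩ := hd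
        subst hp
        have hab2 : List.Chain' (· ≤ ·) [a, b] :=
          hch.infix ⟨u, t' ++ [x], by simp⟩
        have := List.isChain_pair.mp hab2
        omega
    · -- u = p ++ t
      match t, hd with
      | [], hd =>
        simp only [List.nil_append, List.cons.injEq] at hd
        obtain ⟨rfl, rfl, rfl⟩ := hd
        simp only [List.append_nil] at hu
        obtain rfl : u = p := hu
        subst hw
        exact main_case1 _ _ hnd hch hba
      | [c1], hd =>
        exfalso
        simp only [List.cons_append, List.nil_append, List.cons.injEq] at hd
        obtain ⟨rfl, rfl, rfl⟩ := hd
        -- w = p ++ x :: a :: b :: v : has 321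
        have h321 : Has321 w := by
          rw [he]; simpa using has321_mid p v hyx hba
        exact safeAux_not321 _ _ hsafe h321
      | c1 :: c2 :: m, hd =>
        simp only [List.cons_append, List.cons.injEq] at hd
        obtain ⟨rfl, rfl, rfl⟩ := hd
        subst he
        subst hu
        -- w = p ++ x :: y :: (m ++ a :: b :: v), u = p ++ x :: y :: m
        have hndwh : (p ++ (m ++ a :: b :: v)).Nodup :=
          List.Nodup.sublist
            (List.Sublist.append_left
              ((List.sublist_cons_self y _).trans (List.sublist_cons_self x _)) p) hnd
        have hlenw : (p ++ x :: y :: (m ++ a :: b :: v)).length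
            = (p ++ (m ++ a :: b :: v)).length + 1 + 1 := by
          simp only [List.length_append, List.length_cons]; omega
        have hsafewh : SafeW (p ++ (m ++ a :: b :: v)) := by
          have h1 : SafeAux ((p ++ (m ++ a :: b :: v)).length + 1 + 1)
              (p ++ x :: y :: (m ++ a :: b :: v)) := by
            rw [← hlenw]; exact hsafe
          have h2 := h1.2 p x y (m ++ a :: b :: v) hsp
          exact (safeAux_congr _ (p ++ (m ++ a :: b :: v)).length _ (by omega) le_rfl).mp h2
        have hlt : (p ++ (m ++ a :: b :: v)).length < n := by
          rw [hlenw] at hn; omega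
        obtain ⟨H1, H2, H3⟩ := ih (p ++ (m ++ a :: b :: v)).length hlt
          (p ++ (m ++ a :: b :: v)) (p ++ m) v a b le_rfl hndwh hsafewh (by simp) hba
        have hassoc : (p ++ m) ++ v = p ++ (m ++ v) := by simp
        rw [hassoc] at H1 H2 H3
        -- unfold first descent of w
        have hW1 : ndes (p ++ x :: y :: (m ++ a :: b :: v)) = insert (x, y) (ndes (p ++ (m ++ a :: b :: v))) :=
          ndes_split hsp rfl
        have hW3 : nres (p ++ x :: y :: (m ++ a :: b :: v)) = nres (p ++ (m ++ a :: b :: v)) :=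
          nres_split hsp rfl
        -- unfold first descent of u ++ v
        have huv : (p ++ x :: y :: m) ++ v = p ++ x :: y :: (m ++ v) := by simp
        have hspuv : splitFirstDesc (p ++ x :: y :: (m ++ v)) = some (p, x, y, m ++ v) :=
          split_some p (m ++ v) hch hyx
        have hU1 : ndes ((p ++ x :: y :: m) ++ v) = insert (x, y) (ndes (p ++ (m ++ v))) := by
          rw [huv]; exact ndes_split hspuv rfl
        have hU3 : nres ((p ++ x :: y :: m) ++ v) = nres (p ++ (m ++ v)) := by
          rw [huv]; exact nres_split hspuv rfl
        -- x ≠ a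
        have hxa : x ≠ a := by
          intro hcon
          have h2 := (List.nodup_append.mp hnd).2.1
          have hx1 : x ∉ y :: (m ++ a :: b :: v) := (List.nodup_cons.mp h2).1
          exact hx1 (by simp [hcon])
        refine ⟨?_, ?_, ?_⟩
        · rw [hW1, H1, hU1, Finset.insert_comm]
        · rw [hU1]
          simp only [Finset.mem_insert, Prod.mk.injEq, not_or]
          exact ⟨fun hcon => (hxa hcon.1.symm), H2⟩
        · rw [hW3, H3, hU3]

/-- If `w` is a partial permutation in a well-nested family and
`j` is *any* descent of `w` (so `w = u ++ [a, b] ++ v` with `b < a`), then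
`NDes(w) = {(a,b)} ⊔ NDes(u ++ v)` (a disjoint union) and
`NRes(w) = NRes(u ++ v)`. -/
theorem stmt11 (E : Set (List ℤ)) (hE : WellNested E) (w : List ℤ) (hw : w ∈ E)
    (u v : List ℤ) (a b : ℤ) (hsplit : w = u ++ [a, b] ++ v) (hdesc : b < a) :
    ndes w = insert (a, b) (ndes (u ++ v)) ∧ (a, b) ∉ ndes (u ++ v) ∧
      nres w = nres (u ++ v) := by
  have hgood : GoodW w := by
    have hmem : ∀ z, WEq w z → z ∈ E := by
      intro z hz
      induction hz with
      | refl => exact hw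
      | tail h1 st ih =>
        rcases st with hp | hp
        · exact (hE.2.1 _ _ hp).mp ih
        · exact (hE.2.1 _ _ hp).mpr ih
    intro z hz
    exact ⟨hE.1 z (hmem z hz), hE.2.2 z (hmem z hz)⟩
  have hnd : w.Nodup := hgood.nodup
  have hsafe : SafeW w := good_safeAux w.length w.length w le_rfl hgood
  have hw2 : w = u ++ a :: b :: v := by simpa using hsplit
  exact main_aux w.length w u v a b le_rfl hnd hsafe hw2 hdesc
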